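/- arXiv:1910.12815 — 3 statements merged into one kernel-verified Lean document; each statement's English description precedes it below -/
import Mathlib

section
/- For one-dimensional probability measures μ, ν on ℝ with finite p-th moments (p ≥ 1), W_p^p(μ, ν) = ∫₀¹ |F_μ^{-1}(t) − F_ν^{-1}(t)|^p dt, where F_μ^{-1} and F_ν^{-1} are the quantile functions (generalized inverses of the CDFs) of μ and ν. -/
open MeasureTheory ENNReal Metric

noncomputable section

/-- `γ` is a coupling of `μ` and `ν`. -/
def IsCoupling {E F : Type*} [MeasurableSpace E] [MeasurableSpace F]
    (γ : Measure (E × F)) (μ : Measure E) (ν : Measure F) : Prop :=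
  γ.map Prod.fst = μ ∧ γ.map Prod.snd = ν

/-- The `p`-th power of the Wasserstein distance of order `p`:
infimum over couplings of the `p`-cost. -/
def WpCost (p : ℝ) {E : Type*} [NormedAddCommGroup E] [MeasurableSpace E]
    (μ ν : Measure E) : ℝ≥0∞ :=
  ⨅ (γ : Measure (E × E)) (_ : IsCoupling γ μ ν),
    ∫⁻ z, (‖z.1 - z.2‖₊ : ℝ≥0∞) ^ p ∂γ

/-- The Wasserstein distance of order `p`. -/
def Wp (p : ℝ) {E : Type*} [NormedAddCommGroup E] [MeasurableSpace E]
    (μ ν : Measure E) : ℝ≥0∞ := WpCost p μ ν ^ (1 / p)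

abbrev Euc (d : ℕ) := EuclideanSpace ℝ (Fin d)

/-- Linear form associated with a direction `u`. -/
def projDir {d : ℕ} (u : Euc d) : Euc d → ℝ := fun y => inner ℝ u y

/-- The `p`-th power of the Sliced-Wasserstein distance w.r.t. a measure `σu` on the sphere. -/
def SWpCost (p : ℝ) {d : ℕ} (σu : Measure (sphere (0 : Euc d) 1))
    (μ ν : Measure (Euc d)) : ℝ≥0∞ :=
  ∫⁻ u, WpCost p (μ.map (projDir (u : Euc d))) (ν.map (projDir (u : Euc d))) ∂σu

/-- Sliced-Wasserstein distance of order `p`. -/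
def SWp (p : ℝ) {d : ℕ} (σu : Measure (sphere (0 : Euc d) 1))
    (μ ν : Measure (Euc d)) : ℝ≥0∞ := SWpCost p σu μ ν ^ (1 / p)

/-- Centered isotropic Gaussian `N(0, σ² I_d)` on `ℝᵈ`. -/
def isoGaussian (d : ℕ) (σ : ℝ) : Measure (Euc d) :=
  (Measure.pi fun _ : Fin d => ProbabilityTheory.gaussianReal 0 (Real.toNNReal (σ ^ 2))).map
    (EuclideanSpace.equiv (Fin d) ℝ).symm

/-- Empirical measure of `m` points. -/
def empirical {E : Type*} [MeasurableSpace E] {m : ℕ} (z : Fin m → E) : Measure E :=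
  (m : ℝ≥0∞)⁻¹ • ∑ i, Measure.dirac (z i)

/-- Quantile function (generalized inverse CDF). -/
def quantile (μ : Measure ℝ) (t : ℝ) : ℝ := sInf {x | t ≤ ProbabilityTheory.cdf μ x}

/-- Finite `p`-th moment. -/
def FiniteMomentP (p : ℝ) {E : Type*} [NormedAddCommGroup E] [MeasurableSpace E]
    (μ : Measure E) : Prop := ∫⁻ y, (‖y‖₊ : ℝ≥0∞) ^ p ∂μ < ∞

/-- Rotation invariance of a measure on the unit sphere. -/
def SphereInvariant {d : ℕ} (σu : Measure (sphere (0 : Euc d) 1)) : Prop :=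
  ∀ T : Euc d ≃ₗᵢ[ℝ] Euc d,
    σu.map (fun (u : sphere (0 : Euc d) 1) => (⟨T u, by
      rw [mem_sphere_zero_iff_norm, T.norm_map, ← mem_sphere_zero_iff_norm]
      exact u.2⟩ : sphere (0 : Euc d) 1)) = σu

namespace Stmt9Aux

open ProbabilityTheory Set Filter

/-- Density-generating Stieltjes function for `|x|^p`. -/
def fp (p : ℝ) : ℝ → ℝ := fun r => if r < 0 then 0 else p * r ^ (p - 1)

lemma fp_mono {p : ℝ} (hp : 1 ≤ p) : Monotone (fp p) := by
  intro a b hab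
  unfold fp
  by_cases hb : b < 0
  · rw [if_pos (lt_of_le_of_lt hab hb), if_pos hb]
  · rw [if_neg hb]
    by_cases ha : a < 0
    · rw [if_pos ha]
      exact mul_nonneg (by linarith) (Real.rpow_nonneg (not_lt.mp hb) _)
    · rw [if_neg ha]
      exact mul_le_mul_of_nonneg_left
        (Real.rpow_le_rpow (not_lt.mp ha) hab (by linarith)) (by linarith)

lemma fp_rc {p : ℝ} (hp : 1 ≤ p) (x : ℝ) : ContinuousWithinAt (fp p) (Ici x) x := by
  by_cases hx : x < 0
  · have : fp p =ᶠ[nhds x] (fun _ => (0:ℝ)) :=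
      eventually_of_mem (Iio_mem_nhds hx) fun y hy => if_pos hy
    exact (continuousAt_const.congr this.symm).continuousWithinAt
  · have hcont : ContinuousWithinAt (fun y => p * y ^ (p - 1)) (Ici x) x :=
      (continuousAt_const.mul (Real.continuousAt_rpow_const x (p-1)
        (Or.inr (by linarith)))).continuousWithinAt
    refine hcont.congr (fun y hy => ?_) ?_
    · exact if_neg (not_lt.mpr (le_trans (not_lt.mp hx) hy))
    · exact if_neg hx

/-- The Stieltjes function. -/
def Fp {p : ℝ} (hp : 1 ≤ p) : StieltjesFunction ℝ := ⟨fp p, fp_mono hp, fp_rc hp⟩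

lemma Fp_tendsto_atBot {p : ℝ} (hp : 1 ≤ p) : Tendsto (Fp hp) atBot (nhds 0) := by
  refine tendsto_const_nhds.congr' ?_
  exact (eventually_lt_atBot (0:ℝ)).mono fun r hr => (if_pos hr).symm

lemma rho_Iic {p : ℝ} (hp : 1 ≤ p) (v : ℝ) :
    (Fp hp).measure (Iic v) = ENNReal.ofReal (fp p v) := by
  rw [StieltjesFunction.measure_Iic _ (Fp_tendsto_atBot hp), sub_zero]; rfl
open intervalIntegral in
lemma int_fp {p : ℝ} (hp : 1 ≤ p) (w : ℝ) :
    ∫⁻ v in Iio w, ENNReal.ofReal (fp p v) = ENNReal.ofReal ((max w 0) ^ p) := by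
  have hp0 : (0:ℝ) < p := by linarith
  by_cases hw : w ≤ 0
  · have h1 : ∫⁻ v in Iio w, ENNReal.ofReal (fp p v) = ∫⁻ _ in Iio w, 0 := by
      refine setLIntegral_congr_fun measurableSet_Iio (fun v hv => ?_)
      rw [fp, if_pos (lt_of_lt_of_le hv hw), ENNReal.ofReal_zero]
    rw [h1, lintegral_zero, max_eq_right hw, Real.zero_rpow hp0.ne', ENNReal.ofReal_zero]
  · push_neg at hw
    have hsplit : Iio w = Iio 0 ∪ Ico 0 w := by
      ext v; simp only [mem_Iio, mem_union, mem_Ico]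
      constructor
      · intro h; by_cases h0 : v < 0; exacts [Or.inl h0, Or.inr ⟨not_lt.mp h0, h⟩]
      · rintro (h | ⟨_, h⟩); exacts [lt_trans h hw, h]
    have hdisj : Disjoint (Iio (0:ℝ)) (Ico 0 w) := by
      rw [Set.disjoint_left]; intro v h1 h2; exact absurd h2.1 (not_le.mpr h1)
    rw [hsplit, lintegral_union measurableSet_Ico hdisj]
    have h1 : ∫⁻ v in Iio (0:ℝ), ENNReal.ofReal (fp p v) = 0 := by
      have : ∫⁻ v in Iio (0:ℝ), ENNReal.ofReal (fp p v) = ∫⁻ _ in Iio (0:ℝ), 0 := by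
        refine setLIntegral_congr_fun measurableSet_Iio (fun v hv => ?_)
        rw [fp, if_pos (mem_Iio.mp hv), ENNReal.ofReal_zero]
      rw [this, lintegral_zero]
    rw [h1, zero_add]
    have h2 : ∫⁻ v in Ico (0:ℝ) w, ENNReal.ofReal (fp p v)
        = ∫⁻ v in Ioc (0:ℝ) w, ENNReal.ofReal (fp p v) := setLIntegral_congr Ico_ae_eq_Ioc
    rw [h2]
    have hfeq : ∀ v ∈ Ioc (0:ℝ) w, ENNReal.ofReal (fp p v) = ENNReal.ofReal (p * v ^ (p-1)) := by
      intro v hv; rw [fp, if_neg (not_lt.mpr hv.1.le)]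
    rw [setLIntegral_congr_fun measurableSet_Ioc hfeq]
    have hint : IntegrableOn (fun v => p * v ^ (p-1)) (Ioc 0 w) volume := by
      have := ((intervalIntegral.intervalIntegrable_rpow' (a:=0) (b:=w) (r := p - 1) (by linarith)).const_mul p : IntervalIntegrable _ volume 0 w)
      rw [intervalIntegrable_iff_integrableOn_Ioc_of_le hw.le] at this
      exact this
    have hnn : 0 ≤ᵐ[volume.restrict (Ioc 0 w)] fun v => p * v ^ (p-1) := by
      refine (ae_restrict_mem measurableSet_Ioc).mono fun v hv => ?_
      exact mul_nonneg hp0.le (Real.rpow_nonneg hv.1.le _)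
    rw [← ofReal_integral_eq_lintegral_ofReal hint hnn]
    congr 1
    rw [← intervalIntegral.integral_of_le hw.le, intervalIntegral.integral_const_mul,
      integral_rpow (Or.inl (by linarith))]
    rw [max_eq_left hw.le]
    rw [sub_add_cancel, Real.zero_rpow hp0.ne']
    field_simp
    rw [sub_zero]
lemma hinge_rep {p : ℝ} (hp : 1 ≤ p) (w : ℝ) :
    ∫⁻ r, ENNReal.ofReal (w - r) ∂(Fp hp).measure = ENNReal.ofReal ((max w 0) ^ p) := by
  calc ∫⁻ r, ENNReal.ofReal (w - r) ∂(Fp hp).measure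
      = ∫⁻ r, ∫⁻ v, (Ico r w).indicator (1 : ℝ → ℝ≥0∞) v ∂volume ∂(Fp hp).measure := by
        refine lintegral_congr fun r => ?_
        rw [lintegral_indicator_one measurableSet_Ico, Real.volume_Ico]
    _ = ∫⁻ v, ∫⁻ r, (Ico r w).indicator (1 : ℝ → ℝ≥0∞) v ∂(Fp hp).measure ∂volume := by
        refine lintegral_lintegral_swap ?_
        have hs : MeasurableSet {q : ℝ × ℝ | q.1 ≤ q.2 ∧ q.2 < w} :=
          (measurableSet_le measurable_fst measurable_snd).inter
            (measurableSet_lt measurable_snd measurable_const)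
        have heq : (Function.uncurry fun r v => (Ico r w).indicator (1 : ℝ → ℝ≥0∞) v)
            = {q : ℝ × ℝ | q.1 ≤ q.2 ∧ q.2 < w}.indicator 1 := by
          funext q
          simp only [Function.uncurry, Set.indicator_apply, mem_Ico, mem_setOf_eq, Pi.one_apply]
        rw [heq]
        exact (measurable_const.indicator hs).aemeasurable
    _ = ∫⁻ v, (Iio w).indicator (fun v => (Fp hp).measure (Iic v)) v ∂volume := by
        refine lintegral_congr fun v => ?_
        by_cases hv : v < w
        · rw [Set.indicator_of_mem (mem_Iio.mpr hv)]
          have h2 : ∀ r:ℝ, (Ico r w).indicator (1 : ℝ → ℝ≥0∞) v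
              = (Iic v).indicator (1 : ℝ → ℝ≥0∞) r := by
            intro r
            simp only [Set.indicator_apply, mem_Ico, mem_Iic]
            by_cases h : r ≤ v
            · simp [h, hv]
            · simp [h]
          simp_rw [h2]
          rw [lintegral_indicator_one measurableSet_Iic]
        · rw [Set.indicator_of_notMem (by simpa using hv)]
          have h2 : ∀ r:ℝ, (Ico r w).indicator (1 : ℝ → ℝ≥0∞) v = 0 := by
            intro r
            simp only [Set.indicator_apply, mem_Ico]
            rw [if_neg (fun h => hv h.2)]
          simp_rw [h2]
          exact lintegral_zero
    _ = ∫⁻ v in Iio w, ENNReal.ofReal (fp p v) ∂volume := by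
        rw [lintegral_indicator measurableSet_Iio]
        exact lintegral_congr fun v => by rw [rho_Iic]
    _ = ENNReal.ofReal ((max w 0) ^ p) := int_fp hp w
lemma abs_split {p : ℝ} (hp : 1 ≤ p) (w : ℝ) :
    ((‖w‖₊ : ℝ≥0∞)) ^ p
      = ENNReal.ofReal ((max w 0) ^ p) + ENNReal.ofReal ((max (-w) 0) ^ p) := by
  have hp0 : (0:ℝ) < p := by linarith
  rw [← enorm_eq_nnnorm, Real.enorm_eq_ofReal_abs, ENNReal.ofReal_rpow_of_nonneg (abs_nonneg w) hp0.le]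
  rcases le_total w 0 with h | h
  · rw [max_eq_right h, max_eq_left (neg_nonneg.mpr h), Real.zero_rpow hp0.ne',
      ENNReal.ofReal_zero, zero_add, abs_of_nonpos h]
  · rw [max_eq_left h, max_eq_right (neg_nonpos.mpr h), Real.zero_rpow hp0.ne',
      ENNReal.ofReal_zero, add_zero, abs_of_nonneg h]

lemma term_rep (r : ℝ) (γ : Measure (ℝ × ℝ)) [SFinite γ] :
    ∫⁻ z, ENNReal.ofReal (z.1 - z.2 - r) ∂γ
      = ∫⁻ v, γ {z : ℝ × ℝ | v < z.1 ∧ z.2 ≤ v - r} ∂volume := by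
  have hs : MeasurableSet {q : (ℝ × ℝ) × ℝ | q.1.2 + r ≤ q.2 ∧ q.2 < q.1.1} :=
    (measurableSet_le (measurable_fst.snd.add_const r) measurable_snd).inter
      (measurableSet_lt measurable_snd measurable_fst.fst)
  calc ∫⁻ z, ENNReal.ofReal (z.1 - z.2 - r) ∂γ
      = ∫⁻ z : ℝ × ℝ, ∫⁻ v, (Ico (z.2 + r) z.1).indicator (1 : ℝ → ℝ≥0∞) v ∂volume ∂γ := by
        refine lintegral_congr fun z => ?_
        rw [lintegral_indicator_one measurableSet_Ico, Real.volume_Ico, sub_sub]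
    _ = ∫⁻ v, ∫⁻ z : ℝ × ℝ, (Ico (z.2 + r) z.1).indicator (1 : ℝ → ℝ≥0∞) v ∂γ ∂volume := by
        refine lintegral_lintegral_swap ?_
        have heq : (Function.uncurry fun (z : ℝ × ℝ) v =>
              (Ico (z.2 + r) z.1).indicator (1 : ℝ → ℝ≥0∞) v)
            = {q : (ℝ × ℝ) × ℝ | q.1.2 + r ≤ q.2 ∧ q.2 < q.1.1}.indicator 1 := by
          funext q
          simp only [Function.uncurry, Set.indicator_apply, mem_Ico, mem_setOf_eq, Pi.one_apply]
        rw [heq]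
        exact (measurable_const.indicator hs).aemeasurable
    _ = ∫⁻ v, γ {z : ℝ × ℝ | v < z.1 ∧ z.2 ≤ v - r} ∂volume := by
        refine lintegral_congr fun v => ?_
        have heq : ∀ z : ℝ × ℝ, (Ico (z.2 + r) z.1).indicator (1 : ℝ → ℝ≥0∞) v
            = {z : ℝ × ℝ | v < z.1 ∧ z.2 ≤ v - r}.indicator (1 : (ℝ × ℝ) → ℝ≥0∞) z := by
          intro z
          simp only [Set.indicator_apply, mem_Ico, mem_setOf_eq, Pi.one_apply,
            le_sub_iff_add_le, and_comm]
        simp_rw [heq]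
        exact lintegral_indicator_one
          ((measurableSet_lt measurable_const measurable_fst).inter
            (measurableSet_le measurable_snd measurable_const))

lemma term_rep' (r : ℝ) (γ : Measure (ℝ × ℝ)) [IsProbabilityMeasure γ] :
    ∫⁻ z, ENNReal.ofReal (z.2 - z.1 - r) ∂γ
      = ∫⁻ v, γ {z : ℝ × ℝ | v < z.2 ∧ z.1 ≤ v - r} ∂volume := by
  haveI : IsProbabilityMeasure (γ.map Prod.swap) :=
    Measure.isProbabilityMeasure_map measurable_swap.aemeasurable
  have h1 : ∫⁻ z, ENNReal.ofReal (z.2 - z.1 - r) ∂γ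
      = ∫⁻ z, ENNReal.ofReal (z.1 - z.2 - r) ∂(γ.map Prod.swap) := by
    rw [lintegral_map (by fun_prop : Measurable fun z : ℝ × ℝ => ENNReal.ofReal (z.1 - z.2 - r))
      measurable_swap]
    rfl
  rw [h1, term_rep r (γ.map Prod.swap)]
  refine lintegral_congr fun v => ?_
  have hsm : MeasurableSet {z : ℝ × ℝ | v < z.1 ∧ z.2 ≤ v - r} :=
    (measurableSet_lt measurable_const measurable_fst).inter
      (measurableSet_le measurable_snd measurable_const)
  rw [Measure.map_apply measurable_swap hsm]
  exact congrArg γ (by ext z; simp [Set.mem_preimage])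


lemma cost_rep {p : ℝ} (hp : 1 ≤ p) (γ : Measure (ℝ × ℝ)) [IsProbabilityMeasure γ] :
    ∫⁻ z, ((‖z.1 - z.2‖₊ : ℝ≥0∞)) ^ p ∂γ
      = ∫⁻ r, ((∫⁻ v, γ {z : ℝ × ℝ | v < z.1 ∧ z.2 ≤ v - r} ∂volume)
          + ∫⁻ v, γ {z : ℝ × ℝ | v < z.2 ∧ z.1 ≤ v - r} ∂volume) ∂(Fp hp).measure := by
  have hm1 : ∀ r : ℝ, Measurable fun z : ℝ × ℝ => ENNReal.ofReal (z.1 - z.2 - r) :=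
    fun r => ((measurable_fst.sub measurable_snd).sub measurable_const).ennreal_ofReal
  calc ∫⁻ z, ((‖z.1 - z.2‖₊ : ℝ≥0∞)) ^ p ∂γ
      = ∫⁻ z : ℝ × ℝ, ∫⁻ r, (ENNReal.ofReal (z.1 - z.2 - r)
          + ENNReal.ofReal (z.2 - z.1 - r)) ∂(Fp hp).measure ∂γ := by
        refine lintegral_congr fun z => ?_
        rw [lintegral_add_left (by fun_prop : Measurable fun r : ℝ => ENNReal.ofReal (z.1 - z.2 - r)),
          hinge_rep hp, hinge_rep hp, abs_split hp, neg_sub]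
    _ = ∫⁻ r, ∫⁻ z : ℝ × ℝ, (ENNReal.ofReal (z.1 - z.2 - r)
          + ENNReal.ofReal (z.2 - z.1 - r)) ∂γ ∂(Fp hp).measure := by
        refine lintegral_lintegral_swap ?_
        exact ((((measurable_fst.fst.sub measurable_fst.snd).sub
          measurable_snd).ennreal_ofReal).add
          (((measurable_fst.snd.sub measurable_fst.fst).sub
            measurable_snd).ennreal_ofReal)).aemeasurable
    _ = ∫⁻ r, ((∫⁻ v, γ {z : ℝ × ℝ | v < z.1 ∧ z.2 ≤ v - r} ∂volume)
          + ∫⁻ v, γ {z : ℝ × ℝ | v < z.2 ∧ z.1 ≤ v - r} ∂volume) ∂(Fp hp).measure := by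
        refine lintegral_congr fun r => ?_
        rw [lintegral_add_left (hm1 r), term_rep r γ, term_rep' r γ]
section Quantile

variable (μ ν : Measure ℝ) [IsProbabilityMeasure μ] [IsProbabilityMeasure ν]

omit [IsProbabilityMeasure μ] in
lemma bddBelow_S {t : ℝ} (ht : t ∈ Ioo (0:ℝ) 1) : BddBelow {x | t ≤ cdf μ x} := by
  have h : ∀ᶠ x in atBot, cdf μ x < t := (tendsto_cdf_atBot μ).eventually_lt_const ht.1
  obtain ⟨x₀, hx₀⟩ := h.exists
  refine ⟨x₀, fun y hy => ?_⟩
  by_contra hlt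
  push_neg at hlt
  exact absurd (le_trans hy (monotone_cdf μ hlt.le)) (not_le.mpr hx₀)

lemma nonempty_S (μ : Measure ℝ) [IsProbabilityMeasure μ] {t : ℝ} (ht : t ∈ Ioo (0:ℝ) 1) :
    {x | t ≤ cdf μ x}.Nonempty := by
  have h : ∀ᶠ x in atTop, t < cdf μ x := (tendsto_cdf_atTop μ).eventually_const_lt ht.2
  obtain ⟨x₁, hx₁⟩ := h.exists
  exact ⟨x₁, hx₁.le⟩

lemma quantile_le_iff {t : ℝ} (ht : t ∈ Ioo (0:ℝ) 1) (x : ℝ) :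
    quantile μ t ≤ x ↔ t ≤ cdf μ x := by
  constructor
  · intro h
    have hx : ∀ z, x < z → t ≤ cdf μ z := by
      intro z hz
      obtain ⟨y, hyS, hyz⟩ := (csInf_lt_iff (bddBelow_S μ ht) (nonempty_S μ ht)).mp
        (lt_of_le_of_lt h hz)
      exact le_trans hyS (monotone_cdf μ hyz.le)
    have hrc : Tendsto (cdf μ) (nhdsWithin x (Ioi x)) (nhds (cdf μ x)) :=
      ((cdf μ).right_continuous x).mono_left (nhdsWithin_mono _ Ioi_subset_Ici_self)
    exact ge_of_tendsto hrc (eventually_nhdsWithin_of_forall fun z hz => hx z hz)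
  · intro h
    exact csInf_le (bddBelow_S μ ht) h

lemma quantile_monoOn : MonotoneOn (quantile μ) (Ioo (0:ℝ) 1) := by
  intro a ha b hb hab
  exact (quantile_le_iff μ ha _).mpr
    (le_trans hab ((quantile_le_iff μ hb (quantile μ b)).mp le_rfl))

/-- The uniform measure on `(0,1)`. -/
def unif : Measure ℝ := volume.restrict (Ioo (0:ℝ) 1)

instance : IsProbabilityMeasure unif := by
  constructor
  rw [unif, Measure.restrict_apply MeasurableSet.univ, univ_inter, Real.volume_Ioo]
  norm_num

lemma quantile_aemeasurable : AEMeasurable (quantile μ) unif :=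
  aemeasurable_restrict_of_monotoneOn measurableSet_Ioo (quantile_monoOn μ)

lemma sandwich {a b : ℝ} (ha : 0 ≤ a) (hb : b ≤ 1) :
    volume (Ioo (0:ℝ) 1 ∩ Ioc a b) = ENNReal.ofReal (b - a) := by
  refine le_antisymm (le_trans (measure_mono inter_subset_right) (le_of_eq (Real.volume_Ioc))) ?_
  rw [← Real.volume_Ioo (a := a) (b := b)]
  refine measure_mono fun t ht => ?_
  exact ⟨⟨lt_of_le_of_lt ha ht.1, lt_of_lt_of_le ht.2 hb⟩, ht.1, ht.2.le⟩

lemma map_quantile : unif.map (quantile μ) = μ := by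
  haveI : IsProbabilityMeasure (unif.map (quantile μ)) :=
    Measure.isProbabilityMeasure_map (quantile_aemeasurable μ)
  refine Measure.ext_of_Iic _ _ fun x => ?_
  rw [Measure.map_apply_of_aemeasurable (quantile_aemeasurable μ) measurableSet_Iic, unif,
    Measure.restrict_apply' measurableSet_Ioo]
  have hset : quantile μ ⁻¹' Iic x ∩ Ioo 0 1 = Ioo (0:ℝ) 1 ∩ Ioc 0 (cdf μ x) := by
    ext t
    simp only [mem_inter_iff, mem_preimage, mem_Iic, mem_Ioo, mem_Ioc]
    constructor
    · rintro ⟨h1, h2⟩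
      exact ⟨h2, h2.1, (quantile_le_iff μ h2 x).mp h1⟩
    · rintro ⟨h2, _, h3⟩
      exact ⟨(quantile_le_iff μ h2 x).mpr h3, h2⟩
  rw [hset, sandwich le_rfl (cdf_le_one μ x), sub_zero, ofReal_cdf]

variable {μ ν} in
/-- The comonotone (quantile) coupling. -/
def gstar : Measure (ℝ × ℝ) := unif.map (fun t => (quantile μ t, quantile ν t))

lemma pair_aemeasurable :
    AEMeasurable (fun t => (quantile μ t, quantile ν t)) unif :=
  (quantile_aemeasurable μ).prodMk (quantile_aemeasurable ν)

instance : IsProbabilityMeasure (gstar (μ := μ) (ν := ν)) :=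
  Measure.isProbabilityMeasure_map (pair_aemeasurable μ ν)

lemma gstar_coupling : IsCoupling (gstar (μ := μ) (ν := ν)) μ ν := by
  constructor
  · rw [gstar, AEMeasurable.map_map_of_aemeasurable measurable_fst.aemeasurable
      (pair_aemeasurable μ ν)]
    exact map_quantile μ
  · rw [gstar, AEMeasurable.map_map_of_aemeasurable measurable_snd.aemeasurable
      (pair_aemeasurable μ ν)]
    exact map_quantile ν

lemma gstar_quadrant₁ (v u : ℝ) :
    gstar (μ := μ) (ν := ν) {z : ℝ × ℝ | v < z.1 ∧ z.2 ≤ u} = ν (Iic u) - μ (Iic v) := by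
  have hsm : MeasurableSet {z : ℝ × ℝ | v < z.1 ∧ z.2 ≤ u} :=
    (measurableSet_lt measurable_const measurable_fst).inter
      (measurableSet_le measurable_snd measurable_const)
  rw [gstar, Measure.map_apply_of_aemeasurable (pair_aemeasurable μ ν) hsm, unif,
    Measure.restrict_apply' measurableSet_Ioo]
  have hset : (fun t => (quantile μ t, quantile ν t)) ⁻¹' {z : ℝ × ℝ | v < z.1 ∧ z.2 ≤ u}
      ∩ Ioo 0 1 = Ioo (0:ℝ) 1 ∩ Ioc (cdf μ v) (cdf ν u) := by
    ext t
    simp only [mem_inter_iff, mem_preimage, mem_setOf_eq, mem_Ioo, mem_Ioc]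
    constructor
    · rintro ⟨⟨h1, h2⟩, h3⟩
      refine ⟨h3, ?_, (quantile_le_iff ν h3 u).mp h2⟩
      rw [← not_le]
      intro hc
      exact absurd ((quantile_le_iff μ h3 v).mpr hc) (not_le.mpr h1)
    · rintro ⟨h3, h4, h5⟩
      refine ⟨⟨?_, (quantile_le_iff ν h3 u).mpr h5⟩, h3⟩
      rw [← not_le]
      intro hc
      exact absurd ((quantile_le_iff μ h3 v).mp hc) (not_le.mpr h4)
  rw [hset, sandwich (cdf_nonneg μ v) (cdf_le_one ν u),
    ENNReal.ofReal_sub _ (cdf_nonneg μ v), ofReal_cdf, ofReal_cdf]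

lemma gstar_quadrant₂ (v u : ℝ) :
    gstar (μ := μ) (ν := ν) {z : ℝ × ℝ | v < z.2 ∧ z.1 ≤ u} = μ (Iic u) - ν (Iic v) := by
  have hsm : MeasurableSet {z : ℝ × ℝ | v < z.2 ∧ z.1 ≤ u} :=
    (measurableSet_lt measurable_const measurable_snd).inter
      (measurableSet_le measurable_fst measurable_const)
  rw [gstar, Measure.map_apply_of_aemeasurable (pair_aemeasurable μ ν) hsm, unif,
    Measure.restrict_apply' measurableSet_Ioo]
  have hset : (fun t => (quantile μ t, quantile ν t)) ⁻¹' {z : ℝ × ℝ | v < z.2 ∧ z.1 ≤ u}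
      ∩ Ioo 0 1 = Ioo (0:ℝ) 1 ∩ Ioc (cdf ν v) (cdf μ u) := by
    ext t
    simp only [mem_inter_iff, mem_preimage, mem_setOf_eq, mem_Ioo, mem_Ioc]
    constructor
    · rintro ⟨⟨h1, h2⟩, h3⟩
      refine ⟨h3, ?_, (quantile_le_iff μ h3 u).mp h2⟩
      rw [← not_le]
      intro hc
      exact absurd ((quantile_le_iff ν h3 v).mpr hc) (not_le.mpr h1)
    · rintro ⟨h3, h4, h5⟩
      refine ⟨⟨?_, (quantile_le_iff μ h3 u).mpr h5⟩, h3⟩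
      rw [← not_le]
      intro hc
      exact absurd ((quantile_le_iff ν h3 v).mp hc) (not_le.mpr h4)
  rw [hset, sandwich (cdf_nonneg ν v) (cdf_le_one μ u),
    ENNReal.ofReal_sub _ (cdf_nonneg ν v), ofReal_cdf, ofReal_cdf]

end Quantile
lemma coupling_lb₁ {μ ν : Measure ℝ} (γ : Measure (ℝ × ℝ)) (hγ : IsCoupling γ μ ν) (v u : ℝ) :
    ν (Iic u) - μ (Iic v) ≤ γ {z : ℝ × ℝ | v < z.1 ∧ z.2 ≤ u} := by
  rw [tsub_le_iff_right]
  have h1 : ν (Iic u) = γ {z : ℝ × ℝ | z.2 ≤ u} := by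
    rw [← hγ.2, Measure.map_apply measurable_snd measurableSet_Iic]; rfl
  have h2 : μ (Iic v) = γ {z : ℝ × ℝ | z.1 ≤ v} := by
    rw [← hγ.1, Measure.map_apply measurable_fst measurableSet_Iic]; rfl
  rw [h1, h2]
  refine le_trans (measure_mono ?_) (measure_union_le _ _)
  intro z hz
  by_cases h : v < z.1
  · exact Or.inl ⟨h, hz⟩
  · exact Or.inr (not_lt.mp h)

lemma coupling_lb₂ {μ ν : Measure ℝ} (γ : Measure (ℝ × ℝ)) (hγ : IsCoupling γ μ ν) (v u : ℝ) :
    μ (Iic u) - ν (Iic v) ≤ γ {z : ℝ × ℝ | v < z.2 ∧ z.1 ≤ u} := by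
  rw [tsub_le_iff_right]
  have h1 : μ (Iic u) = γ {z : ℝ × ℝ | z.1 ≤ u} := by
    rw [← hγ.1, Measure.map_apply measurable_fst measurableSet_Iic]; rfl
  have h2 : ν (Iic v) = γ {z : ℝ × ℝ | z.2 ≤ v} := by
    rw [← hγ.2, Measure.map_apply measurable_snd measurableSet_Iic]; rfl
  rw [h1, h2]
  refine le_trans (measure_mono ?_) (measure_union_le _ _)
  intro z hz
  by_cases h : v < z.2
  · exact Or.inl ⟨h, hz⟩
  · exact Or.inr (not_lt.mp h)

lemma cost_gstar {p : ℝ} (hp : 1 ≤ p) (μ ν : Measure ℝ)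
    [IsProbabilityMeasure μ] [IsProbabilityMeasure ν] :
    ∫⁻ z, ((‖z.1 - z.2‖₊ : ℝ≥0∞)) ^ p ∂(gstar (μ := μ) (ν := ν))
      = ∫⁻ t in Ioo (0:ℝ) 1, ENNReal.ofReal (|quantile μ t - quantile ν t| ^ p) := by
  have hmeas : Measurable fun z : ℝ × ℝ => ((‖z.1 - z.2‖₊ : ℝ≥0∞)) ^ p :=
    ((measurable_fst.sub measurable_snd).nnnorm.coe_nnreal_ennreal).pow measurable_const
  rw [gstar, lintegral_map' hmeas.aemeasurable (pair_aemeasurable μ ν)]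
  refine lintegral_congr fun t => ?_
  rw [← enorm_eq_nnnorm, Real.enorm_eq_ofReal_abs, ENNReal.ofReal_rpow_of_nonneg (abs_nonneg _) (by linarith)]

lemma main (p : ℝ) (hp : 1 ≤ p) (μ ν : Measure ℝ)
    [IsProbabilityMeasure μ] [IsProbabilityMeasure ν] :
    WpCost p μ ν
      = ∫⁻ t in Ioo (0:ℝ) 1, ENNReal.ofReal (|quantile μ t - quantile ν t| ^ p) := by
  unfold WpCost
  refine le_antisymm ?_ ?_
  · rw [← cost_gstar hp μ ν]
    exact iInf₂_le (gstar (μ := μ) (ν := ν)) (gstar_coupling μ ν)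
  · refine le_iInf fun γ => le_iInf fun hγ => ?_
    rw [← cost_gstar hp μ ν]
    haveI : IsProbabilityMeasure γ := by
      constructor
      have h1 : γ.map Prod.fst Set.univ = 1 := by rw [hγ.1, measure_univ]
      rwa [Measure.map_apply measurable_fst MeasurableSet.univ, preimage_univ] at h1
    rw [cost_rep hp (gstar (μ := μ) (ν := ν)), cost_rep hp γ]
    refine lintegral_mono fun r => ?_
    refine add_le_add (lintegral_mono fun v => ?_) (lintegral_mono fun v => ?_)
    · rw [gstar_quadrant₁ μ ν v (v - r)]
      exact coupling_lb₁ γ hγ v (v - r)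
    · rw [gstar_quadrant₂ μ ν v (v - r)]
      exact coupling_lb₂ γ hγ v (v - r)

end Stmt9Aux

/-- quantile formula for the 1D Wasserstein distance:
W_p^p(μ, ν) = ∫₀¹ |F_μ⁻¹(t) − F_ν⁻¹(t)|^p dt. -/
theorem stmt9 (p : ℝ) (hp : 1 ≤ p) (μ ν : Measure ℝ)
    [IsProbabilityMeasure μ] [IsProbabilityMeasure ν]
    (hμ : FiniteMomentP p μ) (hν : FiniteMomentP p ν) :
    WpCost p μ ν
      = ∫⁻ t in Set.Ioo (0 : ℝ) 1, ENNReal.ofReal (|quantile μ t - quantile ν t| ^ p) := by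
  exact Stmt9Aux.main p hp μ ν
end
end

section
/- Let ε > 0 be fixed, and let D be a nonnegative function on pairs of datasets such that D(y_{1:n}, z_{1:m(n)}) → D_∞(θ) almost surely as n → ∞ when z_{1:m(n)} are i.i.d. from μ_θ (with m(n)/n → α > 0), where D_∞(θ) is a deterministic function of θ. Assume π({θ : D_∞(θ) = ε}) = 0 and π({θ : D_∞(θ) ≤ ε}) > 0. Then the ABC posterior π^ε_{y_{1:n}}(A) = [∫_A π(dθ) P(D(y_{1:n}, Z_{1:m(n)}) ≤ ε | θ)] / [∫_Θ π(dθ) P(D(y_{1:n}, Z_{1:m(n)}) ≤ ε | θ)] converges, as n → ∞, to the restriction of π to {θ : D_∞(θ) ≤ ε}, i.e., to π(A ∩ {D_∞ ≤ ε}) / π({D_∞ ≤ ε}), by dominated convergence. -/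
open MeasureTheory ENNReal Metric

noncomputable section

/-- large-n limit of the ABC posterior: it converges to the restriction of the
prior π to the region {θ : D_∞(θ) ≤ ε}. -/
theorem stmt14 {Θ : Type*} [MeasurableSpace Θ] {Ω : Type*} [MeasurableSpace Ω]
    (π : Measure Θ) [IsProbabilityMeasure π] (P : Measure Ω) [IsProbabilityMeasure P]
    (D : ℕ → Θ → Ω → ℝ) (hDmeas : ∀ n, Measurable (Function.uncurry (D n)))
    (hDnonneg : ∀ n θ ω, 0 ≤ D n θ ω)
    (Dlim : Θ → ℝ) (hDlim : Measurable Dlim)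
    (hconv : ∀ θ, ∀ᵐ ω ∂P, Filter.Tendsto (fun n => D n θ ω) Filter.atTop (nhds (Dlim θ)))
    (ε : ℝ) (hε : 0 < ε)
    (hboundary : π {θ | Dlim θ = ε} = 0)
    (hpos : 0 < π {θ | Dlim θ ≤ ε}) :
    ∀ A : Set Θ, MeasurableSet A →
      Filter.Tendsto
        (fun n => (∫⁻ θ in A, P {ω | D n θ ω ≤ ε} ∂π) / ∫⁻ θ, P {ω | D n θ ω ≤ ε} ∂π)
        Filter.atTop
        (nhds (π (A ∩ {θ | Dlim θ ≤ ε}) / π {θ | Dlim θ ≤ ε})) := by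
  intro A hA
  set S : Set Θ := {θ | Dlim θ ≤ ε} with hS
  have hSmeas : MeasurableSet S := hDlim measurableSet_Iic
  -- measurability of θ ↦ P {ω | D n θ ω ≤ ε}
  have hgmeas : ∀ n, Measurable (fun θ => P {ω | D n θ ω ≤ ε}) := by
    intro n
    have hs : MeasurableSet {p : Θ × Ω | D n p.1 p.2 ≤ ε} :=
      (hDmeas n) measurableSet_Iic
    exact measurable_measure_prodMk_left hs
  -- pointwise convergence for θ off the boundary
  have hpt : ∀ θ, Dlim θ ≠ ε →
      Filter.Tendsto (fun n => P {ω | D n θ ω ≤ ε}) Filter.atTop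
        (nhds (S.indicator (1 : Θ → ℝ≥0∞) θ)) := by
    intro θ hθ
    have hsm : ∀ n, MeasurableSet {ω | D n θ ω ≤ ε} := by
      intro n
      exact ((hDmeas n).comp (measurable_prodMk_left)) measurableSet_Iic
    have heq : ∀ n, P {ω | D n θ ω ≤ ε}
        = ∫⁻ ω, ({ω | D n θ ω ≤ ε}).indicator (1 : Ω → ℝ≥0∞) ω ∂P := by
      intro n; rw [lintegral_indicator_one (hsm n)]
    simp_rw [heq]
    have hSind : S.indicator (1 : Θ → ℝ≥0∞) θ
        = ∫⁻ _, S.indicator (1 : Θ → ℝ≥0∞) θ ∂P := by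
      simp
    rw [hSind]
    refine tendsto_lintegral_of_dominated_convergence (fun _ => 1)
      (fun n => (measurable_one.indicator (hsm n))) ?_ ?_ ?_
    · intro n; filter_upwards with ω; exact Set.indicator_le_self' (by simp) ω
    · simp
    · filter_upwards [hconv θ] with ω hω
      rcases lt_or_gt_of_ne hθ with h | h
      · have hev : ∀ᶠ n in Filter.atTop, D n θ ω < ε := hω.eventually_lt_const h
        have hval : S.indicator (1 : Θ → ℝ≥0∞) θ = 1 :=
          Set.indicator_of_mem (show θ ∈ S from le_of_lt h) _
        rw [hval]
        refine Filter.Tendsto.congr' ?_ tendsto_const_nhds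
        filter_upwards [hev] with n hn
        exact (Set.indicator_of_mem (show ω ∈ {ω | D n θ ω ≤ ε} from le_of_lt hn) (1 : Ω → ℝ≥0∞)).symm
      · have hev : ∀ᶠ n in Filter.atTop, ε < D n θ ω := hω.eventually_const_lt h
        have hval : S.indicator (1 : Θ → ℝ≥0∞) θ = 0 :=
          Set.indicator_of_notMem (show θ ∉ S from not_le.mpr h) _
        rw [hval]
        refine Filter.Tendsto.congr' ?_ tendsto_const_nhds
        filter_upwards [hev] with n hn
        exact (Set.indicator_of_notMem (show ω ∉ {ω | D n θ ω ≤ ε} from not_le.mpr hn) (1 : Ω → ℝ≥0∞)).symm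
  -- integral convergence over a measurable set B
  have hint : ∀ B : Set Θ, MeasurableSet B →
      Filter.Tendsto (fun n => ∫⁻ θ in B, P {ω | D n θ ω ≤ ε} ∂π) Filter.atTop
        (nhds (π (B ∩ S))) := by
    intro B hB
    have hlim : π (B ∩ S) = ∫⁻ θ in B, S.indicator (1 : Θ → ℝ≥0∞) θ ∂π := by
      rw [lintegral_indicator_one hSmeas, Measure.restrict_apply hSmeas, Set.inter_comm]
    rw [hlim]
    refine tendsto_lintegral_of_dominated_convergence (fun _ => 1)
      (fun n => hgmeas n) ?_ ?_ ?_
    · intro n; filter_upwards with θ; exact prob_le_one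
    · simp only [lintegral_one]
      exact (measure_lt_top (π.restrict B) Set.univ).ne
    · have hae : ∀ᵐ θ ∂π, Dlim θ ≠ ε := by
        rw [ae_iff]; simpa using hboundary
      filter_upwards [ae_restrict_of_ae hae] with θ hθ
      exact hpt θ hθ
  have hnum := hint A hA
  have hden := hint Set.univ MeasurableSet.univ
  simp only [Set.univ_inter, Measure.restrict_univ] at hden
  refine ENNReal.Tendsto.div hnum ?_ hden ?_
  · right; exact hpos.ne'
  · left; exact (measure_lt_top π S).ne
end
end

section
/- For one-dimensional probability measures, the Wasserstein distance of order 1 satisfies W₁(μ, ν) = ∫_ℝ |F_μ(x) − F_ν(x)| dx, where F_μ and F_ν are the cumulative distribution functions. -/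
open MeasureTheory ENNReal Metric

noncomputable section

namespace Stmt18Aux

open ProbabilityTheory Set

/-! ### Elementary interval sets -/

/-- Symmetric difference of `[a, ∞)` and `[b, ∞)`. -/
def symmSet (a b : ℝ) : Set ℝ := {t | (a ≤ t ∧ ¬ b ≤ t) ∨ (b ≤ t ∧ ¬ a ≤ t)}

lemma symmSet_comm (a b : ℝ) : symmSet a b = symmSet b a := by
  ext t; exact or_comm

lemma symmSet_eq {a b : ℝ} (h : a ≤ b) : symmSet a b = Set.Ico a b := by
  ext t
  simp only [symmSet, Set.mem_setOf_eq, Set.mem_Ico, not_le]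
  constructor
  · rintro (⟨h1, h2⟩ | ⟨h1, h2⟩)
    · exact ⟨h1, h2⟩
    · exact absurd (h.trans h1) (not_le.mpr h2)
  · rintro ⟨h1, h2⟩
    exact Or.inl ⟨h1, h2⟩

lemma measurableSet_symmSet (a b : ℝ) : MeasurableSet (symmSet a b) := by
  rcases le_total a b with h | h
  · rw [symmSet_eq h]; exact measurableSet_Ico
  · rw [symmSet_comm, symmSet_eq h]; exact measurableSet_Ico

lemma volume_symmSet (a b : ℝ) : volume (symmSet a b) = ENNReal.ofReal |a - b| := by
  rcases le_total a b with h | h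
  · rw [symmSet_eq h, Real.volume_Ico, abs_of_nonpos (sub_nonpos.mpr h), neg_sub]
  · rw [symmSet_comm, symmSet_eq h, Real.volume_Ico, abs_of_nonneg (sub_nonneg.mpr h)]

/-- Symmetric difference of `(-∞, a]` and `(-∞, b]`. -/
def uSet (a b : ℝ) : Set ℝ := {u | (u ≤ a ∧ ¬ u ≤ b) ∨ (u ≤ b ∧ ¬ u ≤ a)}

lemma uSet_comm (a b : ℝ) : uSet a b = uSet b a := by
  ext u; exact or_comm

lemma uSet_eq {a b : ℝ} (h : b ≤ a) : uSet a b = Set.Ioc b a := by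
  ext u
  simp only [uSet, Set.mem_setOf_eq, Set.mem_Ioc, not_le]
  constructor
  · rintro (⟨h1, h2⟩ | ⟨h1, h2⟩)
    · exact ⟨h2, h1⟩
    · exact absurd (h1.trans h) (not_le.mpr h2)
  · rintro ⟨h1, h2⟩
    exact Or.inl ⟨h2, h1⟩

lemma measurableSet_uSet (a b : ℝ) : MeasurableSet (uSet a b) := by
  rcases le_total b a with h | h
  · rw [uSet_eq h]; exact measurableSet_Ioc
  · rw [uSet_comm, uSet_eq h]; exact measurableSet_Ioc

lemma volume_sandwich {s : Set ℝ} {a b : ℝ} (h1 : Set.Ioo a b ⊆ s) (h2 : s ⊆ Set.Ioc a b) :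
    volume s = ENNReal.ofReal (b - a) := by
  refine le_antisymm ?_ ?_
  · calc volume s ≤ volume (Set.Ioc a b) := measure_mono h2
    _ = ENNReal.ofReal (b - a) := Real.volume_Ioc
  · calc ENNReal.ofReal (b - a) = volume (Set.Ioo a b) := Real.volume_Ioo.symm
    _ ≤ volume s := measure_mono h1

lemma volume_uSet_inter {a b : ℝ} (ha0 : 0 ≤ a) (ha1 : a ≤ 1) (hb0 : 0 ≤ b) (hb1 : b ≤ 1) :
    volume (uSet a b ∩ Set.Ioo 0 1) = ENNReal.ofReal |a - b| := by
  have key : ∀ c d : ℝ, 0 ≤ c → d ≤ 1 → c ≤ d →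
      volume (uSet d c ∩ Set.Ioo 0 1) = ENNReal.ofReal (d - c) := by
    intro c d hc hd hcd
    rw [uSet_eq hcd]
    refine volume_sandwich ?_ ?_
    · intro u hu
      exact ⟨⟨hu.1, hu.2.le⟩, hc.trans_lt hu.1, hu.2.trans_le hd⟩
    · exact fun u hu => hu.1
  rcases le_total b a with h | h
  · rw [key b a hb0 ha1 h, abs_of_nonneg (sub_nonneg.mpr h)]
  · rw [uSet_comm, key a b ha0 hb1 h, abs_of_nonpos (sub_nonpos.mpr h), neg_sub]

lemma aux_ind {α β : Type*} {s : Set α} {t : Set β} {x : α} {y : β} (h : x ∈ s ↔ y ∈ t) :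
    s.indicator (1 : α → ℝ≥0∞) x = t.indicator (1 : β → ℝ≥0∞) y := by
  by_cases hx : x ∈ s
  · rw [Set.indicator_of_mem hx, Set.indicator_of_mem (h.mp hx)]
    rfl
  · rw [Set.indicator_of_notMem hx, Set.indicator_of_notMem fun hy => hx (h.mpr hy)]

/-! ### The quantile function and its Galois property -/

lemma quantile_le_iff (μ : Measure ℝ) [IsProbabilityMeasure μ] {u t : ℝ}
    (h0 : 0 < u) (h1 : u < 1) :
    quantile μ u ≤ t ↔ u ≤ cdf μ t := by
  unfold quantile
  set S := {x | u ≤ cdf μ x} with hS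
  have hmono := monotone_cdf μ
  have hne : S.Nonempty := ((tendsto_cdf_atTop μ).eventually_const_le h1).exists
  obtain ⟨x₀, hx₀⟩ : ∃ x₀, cdf μ x₀ < u :=
    ((tendsto_cdf_atBot μ).eventually_lt_const h0).exists
  have hbdd : BddBelow S :=
    ⟨x₀, fun s hs => le_of_not_gt fun hlt =>
      (not_le.mpr ((hmono hlt.le).trans_lt hx₀)) hs⟩
  constructor
  · intro h
    have key : u ≤ cdf μ (sInf S) := by
      have htend : Filter.Tendsto (cdf μ) (nhdsWithin (sInf S) (Set.Ioi (sInf S)))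
          (nhds (cdf μ (sInf S))) :=
        ((cdf μ).right_continuous (sInf S)).mono_left
          (nhdsWithin_mono _ Set.Ioi_subset_Ici_self)
      refine ge_of_tendsto htend ?_
      filter_upwards [self_mem_nhdsWithin] with x hx
      obtain ⟨s, hsS, hs⟩ := exists_lt_of_csInf_lt hne hx
      exact le_trans hsS (hmono hs.le)
    exact key.trans (hmono h)
  · intro h
    exact csInf_le hbdd h

/-- Measurable modification of `quantile` (equal to it on `(0,1)`). -/
def Q (μ : Measure ℝ) : ℝ → ℝ := fun u => if 0 < u ∧ u < 1 then quantile μ u else 0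

lemma Q_le_iff (μ : Measure ℝ) [IsProbabilityMeasure μ] {u t : ℝ}
    (h0 : 0 < u) (h1 : u < 1) :
    Q μ u ≤ t ↔ u ≤ cdf μ t := by
  rw [Q, if_pos ⟨h0, h1⟩]
  exact quantile_le_iff μ h0 h1

lemma measurable_Q (μ : Measure ℝ) [IsProbabilityMeasure μ] : Measurable (Q μ) := by
  refine measurable_of_Iic fun t => ?_
  have hpre : Q μ ⁻¹' Set.Iic t =
      (Set.Ioo (0:ℝ) 1 ∩ Set.Iic (cdf μ t)) ∪ ((Set.Ioo (0:ℝ) 1)ᶜ ∩ {u : ℝ | (0:ℝ) ≤ t}) := by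
    ext u
    by_cases hu : 0 < u ∧ u < 1
    · have hq := Q_le_iff μ (t := t) hu.1 hu.2
      simp only [Set.mem_preimage, Set.mem_Iic, Set.mem_union, Set.mem_inter_iff,
        Set.mem_Ioo, Set.mem_compl_iff, Set.mem_setOf_eq, hq]
      constructor
      · intro h; exact Or.inl ⟨hu, h⟩
      · rintro (⟨_, h⟩ | ⟨h, _⟩)
        · exact h
        · exact absurd hu h
    · have hQ0 : Q μ u = 0 := by rw [Q, if_neg hu]
      simp only [Set.mem_preimage, Set.mem_Iic, hQ0, Set.mem_union, Set.mem_inter_iff,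
        Set.mem_Ioo, Set.mem_compl_iff, Set.mem_setOf_eq]
      constructor
      · intro h; exact Or.inr ⟨hu, h⟩
      · rintro (⟨h, _⟩ | ⟨_, h⟩)
        · exact absurd h hu
        · exact h
  rw [hpre]
  have h2 : MeasurableSet {u : ℝ | (0:ℝ) ≤ t} := by
    by_cases h : (0:ℝ) ≤ t
    · simp only [h, Set.setOf_true]; exact MeasurableSet.univ
    · simp only [h, Set.setOf_false]; exact MeasurableSet.empty
  exact (measurableSet_Ioo.inter measurableSet_Iic).union
    (measurableSet_Ioo.compl.inter h2)

lemma map_Q (μ : Measure ℝ) [IsProbabilityMeasure μ] :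
    (volume.restrict (Set.Ioo (0:ℝ) 1)).map (Q μ) = μ := by
  have hQm := measurable_Q μ
  haveI hP : IsProbabilityMeasure (volume.restrict (Set.Ioo (0:ℝ) 1)) := by
    constructor
    rw [Measure.restrict_apply_univ, Real.volume_Ioo]
    norm_num
  haveI : IsProbabilityMeasure ((volume.restrict (Set.Ioo (0:ℝ) 1)).map (Q μ)) :=
    Measure.isProbabilityMeasure_map hQm.aemeasurable
  refine Measure.ext_of_Iic _ _ fun t => ?_
  rw [Measure.map_apply hQm measurableSet_Iic,
    Measure.restrict_apply (hQm measurableSet_Iic), ← ofReal_cdf μ t]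
  have h0 := cdf_nonneg μ t
  have h1 := cdf_le_one μ t
  have := volume_sandwich (s := Q μ ⁻¹' Set.Iic t ∩ Set.Ioo 0 1)
    (a := (0:ℝ)) (b := cdf μ t) ?_ ?_
  · rw [this, sub_zero]
  · intro u hu
    have hu1 : u < 1 := hu.2.trans_le h1
    exact ⟨by rw [Set.mem_preimage, Set.mem_Iic, Q_le_iff μ hu.1 hu1]; exact hu.2.le,
      hu.1, hu1⟩
  · rintro u ⟨hQu, hu⟩
    rw [Set.mem_preimage, Set.mem_Iic, Q_le_iff μ hu.1 hu.2] at hQu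
    exact ⟨hu.1, hQu⟩

end Stmt18Aux

open Stmt18Aux ProbabilityTheory in
/-- Cost of any coupling is at least the CDF integral. -/
lemma stmt18_lower (μ ν : Measure ℝ) [IsProbabilityMeasure μ] [IsProbabilityMeasure ν]
    (γ : Measure (ℝ × ℝ)) (hγ : IsCoupling γ μ ν) :
    ∫⁻ x : ℝ, ENNReal.ofReal |cdf μ x - cdf ν x|
      ≤ ∫⁻ z, ENNReal.ofReal |z.1 - z.2| ∂γ := by
  haveI : IsProbabilityMeasure γ := by
    constructor
    have : γ.map Prod.fst Set.univ = 1 := by rw [hγ.1]; exact measure_univ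
    rwa [Measure.map_apply measurable_fst MeasurableSet.univ, Set.preimage_univ] at this
  -- the product set
  set D : Set ((ℝ × ℝ) × ℝ) := {p | p.2 ∈ symmSet p.1.1 p.1.2} with hD_def
  have hD : MeasurableSet D := by
    have : D = ({p : (ℝ × ℝ) × ℝ | p.1.1 ≤ p.2} \ {p | p.1.2 ≤ p.2}) ∪
        ({p : (ℝ × ℝ) × ℝ | p.1.2 ≤ p.2} \ {p | p.1.1 ≤ p.2}) := by
      ext p
      simp only [hD_def, symmSet, Set.mem_setOf_eq, Set.mem_union, Set.mem_diff]
    rw [this]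
    have h1 : MeasurableSet {p : (ℝ × ℝ) × ℝ | p.1.1 ≤ p.2} :=
      measurableSet_le (measurable_fst.fst) measurable_snd
    have h2 : MeasurableSet {p : (ℝ × ℝ) × ℝ | p.1.2 ≤ p.2} :=
      measurableSet_le (measurable_fst.snd) measurable_snd
    exact (h1.diff h2).union (h2.diff h1)
  have step1 : ∫⁻ z, ENNReal.ofReal |z.1 - z.2| ∂γ
      = ∫⁻ z, ∫⁻ t, D.indicator 1 (z, t) ∂volume ∂γ := by
    refine lintegral_congr fun z => ?_
    have hind : ∫⁻ t, D.indicator 1 (z, t) ∂volume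
        = ∫⁻ t, (symmSet z.1 z.2).indicator 1 t ∂volume :=
      lintegral_congr fun t => aux_ind Iff.rfl
    rw [hind, lintegral_indicator_one (measurableSet_symmSet _ _), volume_symmSet]
  have step2 : ∫⁻ z, ∫⁻ t, D.indicator 1 (z, t) ∂volume ∂γ
      = ∫⁻ t, ∫⁻ z, D.indicator 1 (z, t) ∂γ ∂volume := by
    refine lintegral_lintegral_swap ?_
    exact (measurable_one.indicator hD).aemeasurable
  rw [step1, step2]
  refine lintegral_mono fun t => ?_
  -- inner integral equals measure of a symmetric difference in the plane
  set A : Set (ℝ × ℝ) := Prod.fst ⁻¹' Set.Iic t with hA_def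
  set B : Set (ℝ × ℝ) := Prod.snd ⁻¹' Set.Iic t with hB_def
  have hAm : MeasurableSet A := measurable_fst measurableSet_Iic
  have hBm : MeasurableSet B := measurable_snd measurableSet_Iic
  have hslice : ∫⁻ z, D.indicator 1 (z, t) ∂γ
      = ∫⁻ z, ((A \ B) ∪ (B \ A)).indicator 1 z ∂γ := by
    refine lintegral_congr fun z => aux_ind ?_
    simp only [hD_def, symmSet, Set.mem_setOf_eq, Set.mem_union, Set.mem_diff,
      hA_def, hB_def, Set.mem_preimage, Set.mem_Iic]
  rw [hslice, lintegral_indicator_one ((hAm.diff hBm).union (hBm.diff hAm))]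
  have hA : γ A = ENNReal.ofReal (cdf μ t) := by
    rw [hA_def, ← Measure.map_apply measurable_fst measurableSet_Iic, hγ.1, ofReal_cdf]
  have hB : γ B = ENNReal.ofReal (cdf ν t) := by
    rw [hB_def, ← Measure.map_apply measurable_snd measurableSet_Iic, hγ.2, ofReal_cdf]
  have key : ∀ (S T : Set (ℝ × ℝ)), MeasurableSet T →
      γ S - γ T ≤ γ ((S \ T) ∪ (T \ S)) := by
    intro S T hT
    refine le_trans ?_ (measure_mono Set.subset_union_left)
    rw [tsub_le_iff_right]
    calc γ S ≤ γ ((S \ T) ∪ T) := measure_mono (by intro x hx; by_cases h : x ∈ T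
                                                   · exact Or.inr h
                                                   · exact Or.inl ⟨hx, h⟩)
    _ ≤ γ (S \ T) + γ T := measure_union_le _ _
  rcases le_total (cdf μ t) (cdf ν t) with h | h
  · rw [abs_of_nonpos (sub_nonpos.mpr h), neg_sub, ENNReal.ofReal_sub _ (cdf_nonneg μ t),
      ← hA, ← hB]
    calc γ B - γ A ≤ γ ((B \ A) ∪ (A \ B)) := key B A hAm
    _ = γ ((A \ B) ∪ (B \ A)) := by rw [Set.union_comm]
  · rw [abs_of_nonneg (sub_nonneg.mpr h), ENNReal.ofReal_sub _ (cdf_nonneg ν t),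
      ← hA, ← hB]
    exact key A B hBm

open Stmt18Aux ProbabilityTheory in
/-- The quantile coupling cost equals the CDF integral. -/
lemma stmt18_upper (μ ν : Measure ℝ) [IsProbabilityMeasure μ] [IsProbabilityMeasure ν] :
    ∫⁻ z, ENNReal.ofReal |z.1 - z.2|
        ∂((volume.restrict (Set.Ioo (0:ℝ) 1)).map (fun u => (Q μ u, Q ν u)))
      = ∫⁻ x : ℝ, ENNReal.ofReal |cdf μ x - cdf ν x| := by
  have hQμ := measurable_Q μ
  have hQν := measurable_Q ν
  have hpair : Measurable (fun u => (Q μ u, Q ν u)) := hQμ.prodMk hQν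
  have habs : Measurable (fun z : ℝ × ℝ => ENNReal.ofReal |z.1 - z.2|) :=
    ENNReal.measurable_ofReal.comp ((measurable_fst.sub measurable_snd).abs)
  rw [lintegral_map habs hpair]
  set E : Set (ℝ × ℝ) := {p | p.2 ∈ uSet (cdf μ p.1) (cdf ν p.1)} with hE_def
  have hE : MeasurableSet E := by
    have : E = ({p : ℝ × ℝ | p.2 ≤ cdf μ p.1} \ {p | p.2 ≤ cdf ν p.1}) ∪
        ({p : ℝ × ℝ | p.2 ≤ cdf ν p.1} \ {p | p.2 ≤ cdf μ p.1}) := by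
      ext p
      simp only [hE_def, uSet, Set.mem_setOf_eq, Set.mem_union, Set.mem_diff]
    rw [this]
    have h1 : MeasurableSet {p : ℝ × ℝ | p.2 ≤ cdf μ p.1} :=
      measurableSet_le measurable_snd ((monotone_cdf μ).measurable.comp measurable_fst)
    have h2 : MeasurableSet {p : ℝ × ℝ | p.2 ≤ cdf ν p.1} :=
      measurableSet_le measurable_snd ((monotone_cdf ν).measurable.comp measurable_fst)
    exact (h1.diff h2).union (h2.diff h1)
  have step1 : ∫⁻ u in Set.Ioo (0:ℝ) 1, ENNReal.ofReal |Q μ u - Q ν u|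
      = ∫⁻ u in Set.Ioo (0:ℝ) 1, ∫⁻ t, E.indicator 1 (t, u) ∂volume := by
    refine setLIntegral_congr_fun measurableSet_Ioo ?_
    intro u hu
    have hset : symmSet (Q μ u) (Q ν u) = {t : ℝ | (t, u) ∈ E} := by
      ext t
      simp only [symmSet, Set.mem_setOf_eq, hE_def, uSet,
        Q_le_iff μ hu.1 hu.2, Q_le_iff ν hu.1 hu.2]
    have hind : ∫⁻ t, E.indicator 1 (t, u) ∂volume
        = ∫⁻ t, (symmSet (Q μ u) (Q ν u)).indicator 1 t ∂volume := by
      refine lintegral_congr fun t => aux_ind ?_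
      rw [hset]; rfl
    beta_reduce
    rw [hind, lintegral_indicator_one (measurableSet_symmSet _ _), volume_symmSet]
  have step2 : ∫⁻ u in Set.Ioo (0:ℝ) 1, ∫⁻ t, E.indicator 1 (t, u) ∂volume
      = ∫⁻ t, ∫⁻ u in Set.Ioo (0:ℝ) 1, E.indicator 1 (t, u) ∂volume := by
    refine lintegral_lintegral_swap ?_
    exact ((measurable_one.indicator hE).comp measurable_swap).aemeasurable
  rw [step1, step2]
  refine lintegral_congr fun t => ?_
  have hind : ∫⁻ u in Set.Ioo (0:ℝ) 1, E.indicator 1 (t, u)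
      = ∫⁻ u in Set.Ioo (0:ℝ) 1, (uSet (cdf μ t) (cdf ν t)).indicator 1 u :=
    lintegral_congr fun u => aux_ind Iff.rfl
  rw [hind, lintegral_indicator_one (measurableSet_uSet _ _),
    Measure.restrict_apply (measurableSet_uSet _ _),
    volume_uSet_inter (cdf_nonneg μ t) (cdf_le_one μ t) (cdf_nonneg ν t) (cdf_le_one ν t)]

/-- CDF formula for the 1D Wasserstein distance of order 1:
W₁(μ, ν) = ∫ |F_μ(x) − F_ν(x)| dx. -/
theorem stmt18 (μ ν : Measure ℝ) [IsProbabilityMeasure μ] [IsProbabilityMeasure ν]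
    (hμ : FiniteMomentP 1 μ) (hν : FiniteMomentP 1 ν) :
    WpCost 1 μ ν
      = ∫⁻ x : ℝ,
          ENNReal.ofReal |ProbabilityTheory.cdf μ x - ProbabilityTheory.cdf ν x| := by
  have hcost : ∀ γ : Measure (ℝ × ℝ),
      ∫⁻ z, (‖z.1 - z.2‖₊ : ℝ≥0∞) ^ (1:ℝ) ∂γ = ∫⁻ z, ENNReal.ofReal |z.1 - z.2| ∂γ := by
    intro γ
    refine lintegral_congr fun z => ?_
    rw [ENNReal.rpow_one, ← enorm_eq_nnnorm, Real.enorm_eq_ofReal_abs]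
  refine le_antisymm ?_ ?_
  · -- upper bound via the quantile coupling
    set γ₀ : Measure (ℝ × ℝ) :=
      (volume.restrict (Set.Ioo (0:ℝ) 1)).map (fun u => (Stmt18Aux.Q μ u, Stmt18Aux.Q ν u))
      with hγ₀
    have hpair : Measurable (fun u => (Stmt18Aux.Q μ u, Stmt18Aux.Q ν u)) :=
      (Stmt18Aux.measurable_Q μ).prodMk (Stmt18Aux.measurable_Q ν)
    have hcoupling : IsCoupling γ₀ μ ν := by
      constructor
      · rw [hγ₀, Measure.map_map measurable_fst hpair]
        exact Stmt18Aux.map_Q μ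
      · rw [hγ₀, Measure.map_map measurable_snd hpair]
        exact Stmt18Aux.map_Q ν
    calc WpCost 1 μ ν ≤ ∫⁻ z, (‖z.1 - z.2‖₊ : ℝ≥0∞) ^ (1:ℝ) ∂γ₀ := iInf₂_le γ₀ hcoupling
    _ = ∫⁻ z, ENNReal.ofReal |z.1 - z.2| ∂γ₀ := hcost γ₀
    _ = ∫⁻ x : ℝ, ENNReal.ofReal |ProbabilityTheory.cdf μ x - ProbabilityTheory.cdf ν x| :=
        stmt18_upper μ ν
  · -- lower bound: every coupling costs at least the CDF integral
    refine le_iInf₂ fun γ hγ => ?_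
    rw [hcost γ]
    exact stmt18_lower μ ν γ hγ
end
end
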